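/- On ℝ⁸ with coordinates adapted so that ξ⁰,...,ξ³,η⁰,...,η³ is the standard coframe, the 4-form −Ω₁+Ω₂−Ω₃ equals −(1/2)α∧α + Re β, where α := ξ⁰∧ξ¹ − ξ³∧ξ² − η⁰∧η¹ + η³∧η², and β := (ξ⁰+ξ¹i)∧(ξ³−ξ²i)∧(η⁰−η¹i)∧(η³+η²i) is a complex-valued 4-form. -/
import Mathlib


/-!
Statement 10: on ℝ⁸ with standard coframe ξ⁰,…,ξ³,η⁰,…,η³ (modelled by the
standard basis e 0,…,e 7 inside the exterior algebra, with ηⁱ = e (4+i)),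
−Ω₁+Ω₂−Ω₃ = −(1/2)α∧α + Re β, where α and β are as in the paper.
Complex-valued forms are modelled as elements of ℂ ⊗[ℝ] (exterior algebra).
-/

open ExteriorAlgebra
open scoped TensorProduct

set_option synthInstance.maxHeartbeats 1000000
set_option maxHeartbeats 1000000

noncomputable section

/-- The standard coframe of ℝ⁸ inside its exterior algebra. -/
def e (i : Fin 8) : ExteriorAlgebra ℝ (Fin 8 → ℝ) := ι ℝ (Pi.single i 1)

/-- The real part of a complex-valued form. -/
def reC : ℂ ⊗[ℝ] ExteriorAlgebra ℝ (Fin 8 → ℝ) →ₗ[ℝ] ExteriorAlgebra ℝ (Fin 8 → ℝ) :=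
  (TensorProduct.lid ℝ (ExteriorAlgebra ℝ (Fin 8 → ℝ))).toLinearMap ∘ₗ
    TensorProduct.map Complex.reLm LinearMap.id

/-- Ω₁ = ξ⁰∧ξ¹∧ξ²∧ξ³. -/
def Ω₁ : ExteriorAlgebra ℝ (Fin 8 → ℝ) := e 0 * e 1 * e 2 * e 3

/-- Ω₃ = η⁰∧η¹∧η²∧η³. -/
def Ω₃ : ExteriorAlgebra ℝ (Fin 8 → ℝ) := e 4 * e 5 * e 6 * e 7

/-- Ω₂, the twelve-term mixed 4-form. -/
def Ω₂ : ExteriorAlgebra ℝ (Fin 8 → ℝ) :=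
    e 0 * e 1 * e 4 * e 5 + e 0 * e 1 * e 6 * e 7
  + e 2 * e 3 * e 4 * e 5 + e 2 * e 3 * e 6 * e 7
  + e 0 * e 2 * e 4 * e 6 - e 0 * e 2 * e 5 * e 7
  - e 1 * e 3 * e 4 * e 6 + e 1 * e 3 * e 5 * e 7
  + e 0 * e 3 * e 4 * e 7 + e 0 * e 3 * e 5 * e 6
  + e 1 * e 2 * e 4 * e 7 + e 1 * e 2 * e 5 * e 6

/-- α = ξ⁰∧ξ¹ − ξ³∧ξ² − η⁰∧η¹ + η³∧η². -/
def α : ExteriorAlgebra ℝ (Fin 8 → ℝ) := e 0 * e 1 - e 3 * e 2 - e 4 * e 5 + e 7 * e 6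

/-- β = (ξ⁰+ξ¹i)∧(ξ³−ξ²i)∧(η⁰−η¹i)∧(η³+η²i), a complex-valued 4-form. -/
def β : ℂ ⊗[ℝ] ExteriorAlgebra ℝ (Fin 8 → ℝ) :=
  ((1 : ℂ) ⊗ₜ e 0 + Complex.I ⊗ₜ e 1) * ((1 : ℂ) ⊗ₜ e 3 - Complex.I ⊗ₜ e 2) *
    ((1 : ℂ) ⊗ₜ e 4 - Complex.I ⊗ₜ e 5) * ((1 : ℂ) ⊗ₜ e 7 + Complex.I ⊗ₜ e 6)


lemma e_sq (i : Fin 8) : e i * e i = 0 := ι_sq_zero _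

lemma e_sq' (i : Fin 8) (x : ExteriorAlgebra ℝ (Fin 8 → ℝ)) : e i * (e i * x) = 0 := by
  rw [← mul_assoc, e_sq, zero_mul]

lemma e_swap {i j : Fin 8} (_h : j < i) : e i * e j = -(e j * e i) :=
  eq_neg_of_add_eq_zero_left (by rw [add_comm]; exact ι_add_mul_swap _ _)

lemma e_swap' {i j : Fin 8} (h : j < i) (x : ExteriorAlgebra ℝ (Fin 8 → ℝ)) :
    e i * (e j * x) = -(e j * (e i * x)) := by
  rw [← mul_assoc, e_swap h, neg_mul, mul_assoc]

lemma reC_tmul (c : ℂ) (x : ExteriorAlgebra ℝ (Fin 8 → ℝ)) : reC (c ⊗ₜ x) = c.re • x := rfl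

theorem cayley_form_su4_decomposition :
    -Ω₁ + Ω₂ - Ω₃ = -((1 / 2 : ℝ) • (α * α)) + reC β := by
  simp only [Ω₁, Ω₂, Ω₃, α, β]
  simp only [mul_add, add_mul, mul_sub, sub_mul, Algebra.TensorProduct.tmul_mul_tmul,
    one_mul, mul_one, Complex.I_mul_I, neg_mul, mul_neg, neg_neg,
    map_add, map_sub, map_neg, reC_tmul, Complex.one_re, Complex.I_re, Complex.neg_re,
    one_smul, neg_smul, zero_smul]
  simp (config := { decide := true }) only [mul_assoc, e_swap', e_sq', e_swap, e_sq,
    neg_mul, mul_neg, neg_neg, mul_zero, zero_mul, neg_zero, smul_neg, smul_zero]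
  module
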